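/- (Theorem, D_IBSI∘D_IPSI order.) Let ν₁ ≠ 0 and m₁ be real with (m₁−1)ν₁ = −2 (a scale-invariant and magnitude-invariant point). Define the Iso-Perturbation dual ν̃₂ := 4/(m₁−1), and then the Iso-Background dual m̃₂ := −2/ν̃₂ + 1. Then: (i) ν̃₂ = −2ν₁; (ii) (m̃₂−1)ν̃₂ = −2, so (ν̃₂, m̃₂) is again scale-invariant and magnitude-invariant; and (iii) (m̃₂−1)ν₁ = 1, i.e. the point (ν₁, m̃₂) lies exactly on the boundary of the magnitude-invariance region. -/

import Mathlib

/-- D_IBSI ∘ D_IPSI: starting from a scale- and magnitude-invariant point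
    (ν₁, m₁) with (m₁−1)ν₁ = −2, the Iso-Perturbation dual ν̃₂ = 4/(m₁−1) followed by
    the Iso-Background dual m̃₂ = −2/ν̃₂ + 1 gives ν̃₂ = −2ν₁, a new scale- and
    magnitude-invariant point (ν̃₂, m̃₂) with (m̃₂−1)ν̃₂ = −2, and (ν₁, m̃₂) lies on the
    boundary of the magnitude-invariance region: (m̃₂−1)ν₁ = 1. -/
theorem duality_IBSI_IPSI (ν₁ m₁ : ℝ) (hν : ν₁ ≠ 0) (h : (m₁ - 1) * ν₁ = -2)
    (ν₂ m₂ : ℝ) (hν₂ : ν₂ = 4 / (m₁ - 1)) (hm₂ : m₂ = -2 / ν₂ + 1) :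
    ν₂ = -2 * ν₁ ∧ (m₂ - 1) * ν₂ = -2 ∧ (m₂ - 1) * ν₁ = 1 := by
  have hm1 : m₁ - 1 ≠ 0 := by
    intro h0; rw [h0, zero_mul] at h; norm_num at h
  have h1 : ν₂ = -2 * ν₁ := by
    rw [hν₂]; field_simp; nlinarith [h]
  have hν2 : ν₂ ≠ 0 := by rw [h1]; simp [hν]
  refine ⟨h1, ?_, ?_⟩
  · rw [hm₂]; field_simp; ring
  · rw [hm₂, h1]; field_simp; ring
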